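/- The period of γ equals the period of γ⁻¹: let X be a set, b : X⁴ → ℝ a function satisfying the multiplicative cocycle rule and the symmetry b(x,y,z,t) = b(z,t,x,y) for all x,y,z,t, and γ : X → X a bijection such that b is γ-invariant, with two distinct fixed points γ⁺ and γ⁻ (γ(γ⁺) = γ⁺, γ(γ⁻) = γ⁻). Then for all y, z in X with y ∉ {γ⁺, γ⁻} and z ∉ {γ⁺, γ⁻}, b(γ⁺, γ⁻¹(y), γ⁻, y) = b(γ⁻, γ(z), γ⁺, z). -/
import Mathlib

/-- The period of `γ` equals the period of `γ⁻¹`: if `b` satisfies the multiplicative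
cocycle rule and the symmetry `b(x,y,z,t) = b(z,t,x,y)`, and is invariant under a
bijection `γ` with distinct fixed points `γ⁺ = p` and `γ⁻ = m`, then
`b(γ⁺, γ⁻¹ y, γ⁻, y) = b(γ⁻, γ z, γ⁺, z)`. -/
theorem period_inv_eq_period {X : Type*} (b : X → X → X → X → ℝ)
    (hcocycle : ∀ x y z t w : X, x ≠ t → x ≠ w → z ≠ y → z ≠ w →
      b x y z t = b x y z w * b x w z t)
    (hsymm : ∀ x y z t : X, b x y z t = b z t x y)
    (γ : X ≃ X)
    (hinv : ∀ a b' c d : X, b (γ a) (γ b') (γ c) (γ d) = b a b' c d)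
    (p m : X) (hpm : p ≠ m) (hp : γ p = p) (hm : γ m = m)
    (y z : X) (hyp : y ≠ p) (hym : y ≠ m) (hzp : z ≠ p) (hzm : z ≠ m) :
    b p (γ.symm y) m y = b m (γ z) p z := by
  have hgy : γ y ≠ p := fun h => hyp (γ.injective (h.trans hp.symm))
  have hgz : γ z ≠ p := fun h => hzp (γ.injective (h.trans hp.symm))
  have hgzm : γ z ≠ m := fun h => hzm (γ.injective (h.trans hm.symm))
  -- rewrite LHS via invariance: b p (γ⁻¹ y) m y = b p y m (γ y)
  have h1 : b p (γ.symm y) m y = b p y m (γ y) := by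
    have := hinv p (γ.symm y) m y
    rw [hp, hm, γ.apply_symm_apply] at this
    exact this.symm
  rw [h1, hsymm p y m (γ y)]
  -- now goal: b m (γ y) p y = b m (γ z) p z
  have hc1 : b m (γ y) p y = b m (γ y) p (γ z) * b m (γ z) p y :=
    hcocycle m (γ y) p y (γ z) hym.symm hgzm.symm hgy.symm hgz.symm
  have hc2 : b m (γ z) p z = b m (γ z) p y * b m y p z :=
    hcocycle m (γ z) p z y hzm.symm hym.symm hgz.symm hyp.symm
  have hinv2 : b m (γ y) p (γ z) = b m y p z := by
    have := hinv m y p z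
    rw [hp, hm] at this
    exact this
  rw [hc1, hc2, hinv2, mul_comm]
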